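/- arXiv:2303.02114 — 3 statements merged into one kernel-verified Lean document; each statement's English description precedes it below -/
import Mathlib

section
/- Let λ > 0, D > 0, let X ∈ ℝ^{D×p}, y ∈ ℝ^D, let N be a norm on ℝ^p with dual norm N⋆, set U := y − Xβ for a fixed β ∈ ℝ^p, and suppose λ ≥ (2/D)·N⋆(Xᵀ U). If β̂ minimizes α ↦ (1/D)‖y − Xα‖₂² + λN(α) over ℝ^p, then for every α ∈ ℝ^p: (1/D)‖X(β − β̂)‖₂² ≤ (1/D)‖X(β − α)‖₂² + 2λN(α). -/
/-- Type synonym for `Fin p → ℝ` to carry a custom norm. -/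
def ENaux (p : ℕ) : Type := Fin p → ℝ

instance (p : ℕ) : AddCommGroup (ENaux p) := inferInstanceAs (AddCommGroup (Fin p → ℝ))
noncomputable instance (p : ℕ) : Module ℝ (ENaux p) := inferInstanceAs (Module ℝ (Fin p → ℝ))
instance (p : ℕ) : FiniteDimensional ℝ (ENaux p) :=
  inferInstanceAs (FiniteDimensional ℝ (Fin p → ℝ))

lemma dual_bound {p : ℕ} (N : (Fin p → ℝ) → ℝ)
    (hN0 : ∀ w, 0 ≤ N w) (hNeq : ∀ w, N w = 0 ↔ w = 0)
    (hNsmul : ∀ (c : ℝ) (w), N (c • w) = |c| * N w)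
    (hNadd : ∀ w w', N (w + w') ≤ N w + N w')
    (v w : Fin p → ℝ) :
    ∑ j, v j * w j ≤ sSup {r : ℝ | ∃ u : Fin p → ℝ, N u ≤ 1 ∧
      r = ∑ j, v j * u j} * N w := by
  letI instN : NormedAddCommGroup (ENaux p) := AddGroupNorm.toNormedAddCommGroup
    { toFun := fun u : ENaux p => N u
      map_zero' := (hNeq 0).2 rfl
      add_le' := fun u u' => hNadd u u'
      neg' := fun u => by
        have h := hNsmul (-1) (show Fin p → ℝ from u)
        rw [neg_one_smul, abs_neg, abs_one, one_mul] at h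
        exact h
      eq_zero_of_map_eq_zero' := fun u h => (hNeq u).1 h }
  letI : NormedSpace ℝ (ENaux p) :=
    { toModule := inferInstance
      norm_smul_le := fun c u => le_of_eq (by
        show N (c • u) = ‖c‖ * N u
        rw [Real.norm_eq_abs]; exact hNsmul c u) }
  have hnorm : ∀ u : ENaux p, ‖u‖ = N u := fun u => rfl
  let f : (ENaux p) →ₗ[ℝ] ℝ :=
    { toFun := fun u : ENaux p => ∑ j, v j * (u : Fin p → ℝ) j
      map_add' := fun u u' => by
        show (∑ j, v j * (u j + u' j)) = _
        simp [mul_add, Finset.sum_add_distrib]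
      map_smul' := fun c u => by
        show (∑ j, v j * (c * u j)) = c * ∑ j, v j * u j
        rw [Finset.mul_sum]
        exact Finset.sum_congr rfl fun _ _ => by ring }
  have hf : Continuous f := f.continuous_of_finiteDimensional
  let g : (ENaux p) →L[ℝ] ℝ := ⟨f, hf⟩
  set S : Set ℝ := {r : ℝ | ∃ u : Fin p → ℝ, N u ≤ 1 ∧ r = ∑ j, v j * u j} with hS
  have hBdd : BddAbove S := by
    refine ⟨‖g‖, fun r hr => ?_⟩
    obtain ⟨u, hu, rfl⟩ := hr
    calc ∑ j, v j * u j ≤ |∑ j, v j * u j| := le_abs_self _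
      _ = ‖g (u : ENaux p)‖ := by rw [Real.norm_eq_abs]; rfl
      _ ≤ ‖g‖ * N u := by
          have h := g.le_opNorm (show ENaux p from u)
          rwa [hnorm] at h
      _ ≤ ‖g‖ * 1 := mul_le_mul_of_nonneg_left hu (norm_nonneg g)
      _ = ‖g‖ := mul_one _
  rcases (hN0 w).eq_or_lt with h0 | hpos
  · have hw : w = 0 := (hNeq w).1 h0.symm
    have hN00 : N (0 : Fin p → ℝ) = 0 := (hNeq 0).2 rfl
    simp [hw, hN00]
  · have hmem : (N w)⁻¹ * ∑ j, v j * w j ∈ S := by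
      refine ⟨(N w)⁻¹ • w, ?_, ?_⟩
      · rw [hNsmul, abs_of_nonneg (inv_nonneg.2 (hN0 w)), inv_mul_cancel₀ hpos.ne']
      · rw [Finset.mul_sum]
        exact Finset.sum_congr rfl fun j _ => by
          show (N w)⁻¹ * (v j * w j) = v j * ((N w)⁻¹ * w j); ring
    have hle := le_csSup hBdd hmem
    calc ∑ j, v j * w j = ((N w)⁻¹ * ∑ j, v j * w j) * N w := by
          field_simp
      _ ≤ sSup S * N w := mul_le_mul_of_nonneg_right hle (hN0 w)

/-- Basic oracle inequality for the `N`-penalized least-squares estimator with tuning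
parameter `λ ≥ (2/D)·N⋆(XᵀU)`. -/
theorem oracle_inequality {D p : ℕ} (hD : 0 < D) (lam : ℝ) (hlam0 : 0 < lam)
    (X : Matrix (Fin D) (Fin p) ℝ) (y : Fin D → ℝ)
    (N : (Fin p → ℝ) → ℝ)
    (hN0 : ∀ w, 0 ≤ N w) (hNeq : ∀ w, N w = 0 ↔ w = 0)
    (hNsmul : ∀ (c : ℝ) (w), N (c • w) = |c| * N w)
    (hNadd : ∀ w w', N (w + w') ≤ N w + N w')
    (β : Fin p → ℝ)
    (hlam : lam ≥ (2 / (D : ℝ)) * sSup {r : ℝ | ∃ w : Fin p → ℝ, N w ≤ 1 ∧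
      r = ∑ j, (X.transpose.mulVec (y - X.mulVec β)) j * w j})
    (βhat : Fin p → ℝ)
    (hmin : ∀ a : Fin p → ℝ,
      (1 / (D : ℝ)) * (∑ t, (y t - X.mulVec βhat t) ^ 2) + lam * N βhat ≤
        (1 / (D : ℝ)) * (∑ t, (y t - X.mulVec a t) ^ 2) + lam * N a) :
    ∀ a : Fin p → ℝ,
      (1 / (D : ℝ)) * (∑ t, (X.mulVec (β - βhat) t) ^ 2) ≤
        (1 / (D : ℝ)) * (∑ t, (X.mulVec (β - a) t) ^ 2) + 2 * lam * N a := by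
  intro a
  have hc : (0 : ℝ) < (D : ℝ) := Nat.cast_pos.2 hD
  set U : Fin D → ℝ := y - X.mulVec β with hU
  set v : Fin p → ℝ := X.transpose.mulVec U with hv
  -- transpose swap
  have hswap : ∀ w : Fin p → ℝ, ∑ t, U t * X.mulVec w t = ∑ j, v j * w j := by
    intro w
    simp only [hv, Matrix.mulVec, dotProduct, Matrix.transpose_apply,
      Finset.sum_mul, Finset.mul_sum]
    rw [Finset.sum_comm]
    exact Finset.sum_congr rfl fun j _ => Finset.sum_congr rfl fun t _ => by ring
  -- expansion of the squared residual
  have expand : ∀ b : Fin p → ℝ, ∑ t, (y t - X.mulVec b t) ^ 2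
      = (∑ t, U t ^ 2) - 2 * (∑ j, v j * (b - β) j) + ∑ t, (X.mulVec (b - β) t) ^ 2 := by
    intro b
    rw [← hswap]
    have hpt : ∀ t, (y t - X.mulVec b t) ^ 2
        = U t ^ 2 - 2 * (U t * X.mulVec (b - β) t) + (X.mulVec (b - β) t) ^ 2 := by
      intro t
      rw [Matrix.mulVec_sub]
      simp only [hU, Pi.sub_apply]
      ring
    calc ∑ t, (y t - X.mulVec b t) ^ 2
        = ∑ t, (U t ^ 2 - 2 * (U t * X.mulVec (b - β) t) + (X.mulVec (b - β) t) ^ 2) :=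
          Finset.sum_congr rfl fun t _ => hpt t
      _ = (∑ t, U t ^ 2) - 2 * (∑ t, U t * X.mulVec (b - β) t)
            + ∑ t, (X.mulVec (b - β) t) ^ 2 := by
          rw [Finset.sum_add_distrib, Finset.sum_sub_distrib, Finset.mul_sum]
  have hm := hmin a
  rw [expand βhat, expand a] at hm
  -- abbreviations
  set A := ∑ t, U t ^ 2 with hA
  set q1 := ∑ t, (X.mulVec (βhat - β) t) ^ 2 with hq1
  set q2 := ∑ t, (X.mulVec (a - β) t) ^ 2 with hq2
  set s1 := ∑ j, v j * (βhat - β) j with hs1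
  set s2 := ∑ j, v j * (a - β) j with hs2
  -- multiply hm through by D
  have e : ∀ x z : ℝ, (D : ℝ) * (1 / (D : ℝ) * x + z) = x + (D : ℝ) * z := by
    intro x z; field_simp
  have hm2 : A - 2 * s1 + q1 + (D : ℝ) * (lam * N βhat)
      ≤ A - 2 * s2 + q2 + (D : ℝ) * (lam * N a) := by
    have h := mul_le_mul_of_nonneg_left hm hc.le
    rwa [e, e] at h
  -- linearity of the dual pairing
  have hlin : s1 - s2 = ∑ j, v j * (βhat - a) j := by
    rw [hs1, hs2, ← Finset.sum_sub_distrib]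
    exact Finset.sum_congr rfl fun j _ => by simp only [Pi.sub_apply]; ring
  -- bound on sSup from hlam
  set Ssup := sSup {r : ℝ | ∃ w : Fin p → ℝ, N w ≤ 1 ∧ r = ∑ j, v j * w j} with hSsup
  have hsup : 2 * Ssup ≤ (D : ℝ) * lam := by
    have h := mul_le_mul_of_nonneg_left hlam hc.le
    have h2 : (D : ℝ) * (2 / (D : ℝ) * Ssup) = 2 * Ssup := by field_simp
    linarith [h, h2.ge]
  -- dual norm bound
  have hdual := dual_bound N hN0 hNeq hNsmul hNadd v (βhat - a)
  have hNneg : N (-a) = N a := by simpa using hNsmul (-1) a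
  have htri : N (βhat - a) ≤ N βhat + N a := by
    have := hNadd βhat (-a)
    rwa [hNneg, ← sub_eq_add_neg] at this
  have h3 : s1 - s2 ≤ ((D : ℝ) * lam / 2) * (N βhat + N a) := by
    rw [hlin]
    calc ∑ j, v j * (βhat - a) j ≤ Ssup * N (βhat - a) := hdual
      _ ≤ ((D : ℝ) * lam / 2) * N (βhat - a) :=
          mul_le_mul_of_nonneg_right (by linarith) (hN0 _)
      _ ≤ ((D : ℝ) * lam / 2) * (N βhat + N a) :=
          mul_le_mul_of_nonneg_left htri (by positivity)
  -- key D-multiplied inequality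
  have key : q1 ≤ q2 + 2 * ((D : ℝ) * lam) * N a := by nlinarith [hm2, h3]
  -- symmetry of the quadratic terms
  have hsym : ∀ u u' : Fin p → ℝ,
      ∑ t, (X.mulVec (u - u') t) ^ 2 = ∑ t, (X.mulVec (u' - u) t) ^ 2 := by
    intro u u'
    rw [show u - u' = -(u' - u) by abel, Matrix.mulVec_neg]
    exact Finset.sum_congr rfl fun t _ => by simp [neg_sq]
  rw [hsym β βhat, hsym β a]
  calc (1 / (D : ℝ)) * q1 ≤ (1 / (D : ℝ)) * (q2 + 2 * ((D : ℝ) * lam) * N a) :=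
        mul_le_mul_of_nonneg_left key (by positivity)
    _ = (1 / (D : ℝ)) * q2 + 2 * lam * N a := by field_simp
end

section
/- Let β̂ minimize the penalized objective with nested group norm N and λ ≥ (4/D)·N⋆(XᵀU), and suppose β vanishes on all groups G_l with l > L₀. Writing v := β − β̂, the 'cone condition' holds: Σ_{l=L₀+1}^{L} sqrt(|G_l|)·‖v_{G_l}‖_F ≤ 3·Σ_{l=1}^{L₀} sqrt(|G_l|)·‖v_{G_l}‖_F. -/
/-- Frobenius norm of the part of `v : ℝ^{M×L}` on the group `G_l` (columns of index ≥ l). -/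
noncomputable def tailNormP (M L : ℕ) (v : Fin M × Fin L → ℝ) (l : Fin L) : ℝ :=
  Real.sqrt (∑ q ∈ Finset.univ.filter (fun q : Fin M × Fin L => l ≤ q.2), (v q) ^ 2)

/-- The nested hierarchical group norm on `ℝ^{M×L}`. -/
noncomputable def NG (M L : ℕ) (β : Fin M × Fin L → ℝ) : ℝ :=
  ∑ l : Fin L, Real.sqrt ((M * (L - l.val) : ℕ)) * tailNormP M L β l

lemma tailNormP_nonneg (M L : ℕ) (v : Fin M × Fin L → ℝ) (l : Fin L) :
    0 ≤ tailNormP M L v l := Real.sqrt_nonneg _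

lemma NG_nonneg (M L : ℕ) (v : Fin M × Fin L → ℝ) : 0 ≤ NG M L v :=
  Finset.sum_nonneg fun l _ => mul_nonneg (Real.sqrt_nonneg _) (tailNormP_nonneg M L v l)

lemma tailNormP_triangle (M L : ℕ) (u w : Fin M × Fin L → ℝ) (l : Fin L) :
    tailNormP M L (u + w) l ≤ tailNormP M L u l + tailNormP M L w l := by
  unfold tailNormP
  set s := Finset.univ.filter (fun q : Fin M × Fin L => l ≤ q.2)
  set a := Real.sqrt (∑ q ∈ s, (u q) ^ 2) with ha
  set b := Real.sqrt (∑ q ∈ s, (w q) ^ 2) with hb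
  have ha0 : 0 ≤ a := Real.sqrt_nonneg _
  have hb0 : 0 ≤ b := Real.sqrt_nonneg _
  have hu0 : (0:ℝ) ≤ ∑ q ∈ s, (u q) ^ 2 := by positivity
  have hw0 : (0:ℝ) ≤ ∑ q ∈ s, (w q) ^ 2 := by positivity
  have ha2 : a ^ 2 = ∑ q ∈ s, (u q) ^ 2 := Real.sq_sqrt hu0
  have hb2 : b ^ 2 = ∑ q ∈ s, (w q) ^ 2 := Real.sq_sqrt hw0
  have hCS : (∑ q ∈ s, u q * w q) ≤ a * b := by
    have h1 : (∑ q ∈ s, u q * w q) ^ 2 ≤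
        (∑ q ∈ s, (u q) ^ 2) * (∑ q ∈ s, (w q) ^ 2) :=
      Finset.sum_mul_sq_le_sq_mul_sq s u w
    calc (∑ q ∈ s, u q * w q) ≤ |∑ q ∈ s, u q * w q| := le_abs_self _
    _ = Real.sqrt ((∑ q ∈ s, u q * w q) ^ 2) := (Real.sqrt_sq_eq_abs _).symm
    _ ≤ Real.sqrt ((∑ q ∈ s, (u q) ^ 2) * (∑ q ∈ s, (w q) ^ 2)) := Real.sqrt_le_sqrt h1
    _ = a * b := by rw [Real.sqrt_mul hu0, ha, hb]
  have hsum : (∑ q ∈ s, ((u + w) q) ^ 2) ≤ (a + b) ^ 2 := by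
    have : (∑ q ∈ s, ((u + w) q) ^ 2)
        = (∑ q ∈ s, (u q) ^ 2) + 2 * (∑ q ∈ s, u q * w q) + (∑ q ∈ s, (w q) ^ 2) := by
      rw [Finset.mul_sum, ← Finset.sum_add_distrib, ← Finset.sum_add_distrib]
      exact Finset.sum_congr rfl fun q _ => by simp [Pi.add_apply]; ring
    nlinarith [hCS, ha2, hb2]
  calc Real.sqrt (∑ q ∈ s, ((u + w) q) ^ 2) ≤ Real.sqrt ((a + b) ^ 2) :=
        Real.sqrt_le_sqrt hsum
  _ = a + b := Real.sqrt_sq (by linarith)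

lemma tailNormP_smul (M L : ℕ) (c : ℝ) (u : Fin M × Fin L → ℝ) (l : Fin L) :
    tailNormP M L (c • u) l = |c| * tailNormP M L u l := by
  unfold tailNormP
  rw [← Real.sqrt_sq_eq_abs, ← Real.sqrt_mul (sq_nonneg c), Finset.mul_sum]
  congr 1
  exact Finset.sum_congr rfl fun q _ => by simp [Pi.smul_apply, smul_eq_mul]; ring

lemma NG_smul (M L : ℕ) (c : ℝ) (u : Fin M × Fin L → ℝ) :
    NG M L (c • u) = |c| * NG M L u := by
  unfold NG
  rw [Finset.mul_sum]
  exact Finset.sum_congr rfl fun l _ => by rw [tailNormP_smul]; ring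

lemma one_le_sqrt_card (M L : ℕ) (hM : 0 < M) (l : Fin L) :
    1 ≤ Real.sqrt ((M * (L - l.val) : ℕ)) := by
  have h1 : 1 ≤ M * (L - l.val) := Nat.mul_pos hM (Nat.sub_pos_of_lt l.isLt)
  rw [show (1:ℝ) = Real.sqrt 1 from (Real.sqrt_one).symm]
  exact Real.sqrt_le_sqrt (by exact_mod_cast h1)

lemma coord_le_NG (M L : ℕ) (hM : 0 < M) (u : Fin M × Fin L → ℝ) (q : Fin M × Fin L) :
    |u q| ≤ NG M L u := by
  have hq : q ∈ Finset.univ.filter (fun q' : Fin M × Fin L => q.2 ≤ q'.2) := by simp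
  have h1 : (u q) ^ 2 ≤ ∑ r ∈ Finset.univ.filter (fun q' : Fin M × Fin L => q.2 ≤ q'.2), (u r) ^ 2 :=
    Finset.single_le_sum (fun i _ => sq_nonneg (u i)) hq
  have h2 : |u q| ≤ tailNormP M L u q.2 := by
    rw [← Real.sqrt_sq_eq_abs]
    exact Real.sqrt_le_sqrt h1
  have hc : 1 ≤ Real.sqrt ((M * (L - q.2.val) : ℕ)) := one_le_sqrt_card M L hM q.2
  have h3 : tailNormP M L u q.2 ≤ Real.sqrt ((M * (L - q.2.val) : ℕ)) * tailNormP M L u q.2 :=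
    le_mul_of_one_le_left (tailNormP_nonneg M L u q.2) hc
  have h4 : Real.sqrt ((M * (L - q.2.val) : ℕ)) * tailNormP M L u q.2 ≤ NG M L u :=
    Finset.single_le_sum
      (f := fun l : Fin L => Real.sqrt ((M * (L - l.val) : ℕ)) * tailNormP M L u l)
      (fun l _ => mul_nonneg (Real.sqrt_nonneg _) (tailNormP_nonneg M L u l))
      (Finset.mem_univ q.2)
  linarith

lemma dual_bound_s15 (M L : ℕ) (hM : 0 < M) (Z : Fin M × Fin L → ℝ) (u : Fin M × Fin L → ℝ) :
    (∑ q, Z q * u q) ≤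
      sSup {r : ℝ | ∃ w : Fin M × Fin L → ℝ, NG M L w ≤ 1 ∧ r = ∑ q, Z q * w q} * NG M L u := by
  set S := {r : ℝ | ∃ w : Fin M × Fin L → ℝ, NG M L w ≤ 1 ∧ r = ∑ q, Z q * w q} with hS
  have bdd : BddAbove S := by
    refine ⟨∑ q, |Z q|, ?_⟩
    rintro r ⟨w, hw, rfl⟩
    calc (∑ q, Z q * w q) ≤ ∑ q, |Z q * w q| :=
          Finset.sum_le_sum fun q _ => le_abs_self _
    _ ≤ ∑ q, |Z q| := Finset.sum_le_sum fun q _ => by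
          rw [abs_mul]
          exact mul_le_of_le_one_right (abs_nonneg _) ((coord_le_NG M L hM w q).trans hw)
  by_cases h0 : NG M L u = 0
  · have hu : ∀ q, u q = 0 := fun q =>
      abs_eq_zero.mp (le_antisymm (h0 ▸ coord_le_NG M L hM u q) (abs_nonneg _))
    simp [hu, h0]
  · have hpos : 0 < NG M L u := lt_of_le_of_ne (NG_nonneg M L u) (Ne.symm h0)
    set w := (NG M L u)⁻¹ • u with hwdef
    have hw : NG M L w ≤ 1 := by
      rw [hwdef, NG_smul, abs_of_pos (inv_pos.mpr hpos), inv_mul_cancel₀ h0]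
    have hmem : (∑ q, Z q * w q) ∈ S := ⟨w, hw, rfl⟩
    have hle := le_csSup bdd hmem
    have heq : (∑ q, Z q * w q) = (NG M L u)⁻¹ * ∑ q, Z q * u q := by
      rw [Finset.mul_sum]
      exact Finset.sum_congr rfl fun q _ => by
        simp [hwdef, Pi.smul_apply, smul_eq_mul]; ring
    rw [heq] at hle
    have := mul_le_mul_of_nonneg_right hle (le_of_lt hpos)
    calc (∑ q, Z q * u q) = (NG M L u)⁻¹ * (∑ q, Z q * u q) * NG M L u := by
          field_simp
    _ ≤ sSup S * NG M L u := this

/-- Cone condition for the group-LASSO estimator. -/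
theorem cone_condition {D M L : ℕ} (hD : 0 < D) (L₀ : ℕ)
    (lam : ℝ) (hlam0 : 0 < lam)
    (X : Matrix (Fin D) (Fin M × Fin L) ℝ) (y : Fin D → ℝ)
    (β : Fin M × Fin L → ℝ)
    (hsupp : ∀ q : Fin M × Fin L, L₀ ≤ q.2.val → β q = 0)
    (hlam : lam ≥ (4 / (D : ℝ)) * sSup {r : ℝ | ∃ w : Fin M × Fin L → ℝ, NG M L w ≤ 1 ∧
      r = ∑ q, (X.transpose.mulVec (y - X.mulVec β)) q * w q})
    (βhat : Fin M × Fin L → ℝ)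
    (hmin : ∀ a : Fin M × Fin L → ℝ,
      (1 / (D : ℝ)) * (∑ t, (y t - X.mulVec βhat t) ^ 2) + lam * NG M L βhat ≤
        (1 / (D : ℝ)) * (∑ t, (y t - X.mulVec a t) ^ 2) + lam * NG M L a) :
    (∑ l ∈ Finset.univ.filter (fun l : Fin L => L₀ ≤ l.val),
        Real.sqrt ((M * (L - l.val) : ℕ)) * tailNormP M L (β - βhat) l)
      ≤ 3 * ∑ l ∈ Finset.univ.filter (fun l : Fin L => l.val < L₀),
        Real.sqrt ((M * (L - l.val) : ℕ)) * tailNormP M L (β - βhat) l := by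
  classical
  rcases Nat.eq_zero_or_pos M with hM | hM
  · subst hM
    have hz : ∀ l : Fin L, tailNormP 0 L (β - βhat) l = 0 := fun l => by
      unfold tailNormP
      rw [Finset.sum_eq_zero (fun q _ => q.1.elim0), Real.sqrt_zero]
    simp [hz]
  set v : Fin M × Fin L → ℝ := β - βhat with hvdef
  have hDpos : (0:ℝ) < D := Nat.cast_pos.mpr hD
  set Z : Fin M × Fin L → ℝ := X.transpose.mulVec (y - X.mulVec β) with hZdef
  -- bound on sSup from hlam
  set Ssup : ℝ := sSup {r : ℝ | ∃ w : Fin M × Fin L → ℝ, NG M L w ≤ 1 ∧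
      r = ∑ q, Z q * w q} with hSdef
  have hS : Ssup ≤ (D:ℝ) * lam / 4 := by
    rw [ge_iff_le, div_mul_eq_mul_div, div_le_iff₀ hDpos] at hlam
    linarith
  -- expansion of the least squares term
  have hexp : ∀ t, y t - X.mulVec βhat t = (y t - X.mulVec β t) + X.mulVec v t := by
    intro t
    have : X.mulVec v t = X.mulVec β t - X.mulVec βhat t := by
      rw [hvdef, Matrix.mulVec_sub, Pi.sub_apply]
    rw [this]; ring
  have hsum : (∑ t, (y t - X.mulVec βhat t) ^ 2)
      = (∑ t, (y t - X.mulVec β t) ^ 2)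
        + 2 * (∑ t, (y t - X.mulVec β t) * X.mulVec v t)
        + (∑ t, (X.mulVec v t) ^ 2) := by
    rw [Finset.mul_sum, ← Finset.sum_add_distrib, ← Finset.sum_add_distrib]
    exact Finset.sum_congr rfl fun t _ => by rw [hexp t]; ring
  have hkey := hmin β
  rw [hsum] at hkey
  have hQ : (0:ℝ) ≤ ∑ t, (X.mulVec v t) ^ 2 := by positivity
  have hDinv : (0:ℝ) < 1 / D := by positivity
  -- basic inequality
  have hbasic : lam * NG M L βhat + 2 * (1 / (D:ℝ)) *
      (∑ t, (y t - X.mulVec β t) * X.mulVec v t) ≤ lam * NG M L β := by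
    nlinarith [hkey, mul_nonneg (le_of_lt hDinv) hQ]
  -- adjoint identity
  have hadj : (∑ t, (y t - X.mulVec β t) * X.mulVec v t) = ∑ q, Z q * v q := by
    rw [hZdef]
    simp only [Matrix.mulVec, dotProduct, Matrix.transpose_apply, Pi.sub_apply,
      Finset.mul_sum, Finset.sum_mul]
    rw [Finset.sum_comm]
    exact Finset.sum_congr rfl fun q _ => Finset.sum_congr rfl fun t _ => by ring
  -- dual bound applied to -v
  have hneg := dual_bound_s15 M L hM Z (-v)
  have hNGneg : NG M L (-v) = NG M L v := by
    rw [show -v = (-1 : ℝ) • v by funext q; simp, NG_smul]; simp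
  have hsumneg : (∑ q, Z q * (-v) q) = -(∑ q, Z q * v q) := by
    simp [mul_neg]
  rw [hNGneg, hsumneg, ← hSdef] at hneg
  have hNGv : 0 ≤ NG M L v := NG_nonneg M L v
  have hdual : -(∑ q, Z q * v q) ≤ (D:ℝ) * lam / 4 * NG M L v :=
    hneg.trans (mul_le_mul_of_nonneg_right hS hNGv)
  -- conclude NG βhat ≤ NG β + NG v / 2
  have hmain : NG M L βhat ≤ NG M L β + NG M L v / 2 := by
    rw [hadj] at hbasic
    have h2 : 2 * (1 / (D:ℝ)) * (-((D:ℝ) * lam / 4 * NG M L v))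
        ≤ 2 * (1 / (D:ℝ)) * (∑ q, Z q * v q) :=
      mul_le_mul_of_nonneg_left (by linarith) (by positivity)
    have h3 : 2 * (1 / (D:ℝ)) * (-((D:ℝ) * lam / 4 * NG M L v)) = -(lam / 2 * NG M L v) := by
      field_simp; ring
    rw [h3] at h2
    have h4 : lam * NG M L βhat ≤ lam * (NG M L β + NG M L v / 2) := by linarith
    exact le_of_mul_le_mul_left (by linarith) hlam0
  -- combinatorial part
  set c : Fin L → ℝ := fun l => Real.sqrt ((M * (L - l.val) : ℕ)) with hcdef
  have hc0 : ∀ l, 0 ≤ c l := fun l => Real.sqrt_nonneg _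
  set s1 := Finset.univ.filter (fun l : Fin L => l.val < L₀) with hs1
  set s2 := Finset.univ.filter (fun l : Fin L => L₀ ≤ l.val) with hs2
  have hsplit : ∀ u : Fin M × Fin L → ℝ, NG M L u
      = (∑ l ∈ s1, c l * tailNormP M L u l) + ∑ l ∈ s2, c l * tailNormP M L u l := by
    intro u
    have := Finset.sum_filter_add_sum_filter_not Finset.univ (fun l : Fin L => l.val < L₀)
      (fun l => c l * tailNormP M L u l)
    rw [show Finset.univ.filter (fun l : Fin L => ¬ l.val < L₀) = s2 by
      rw [hs2]; ext l; simp [not_lt]] at this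
    exact this.symm
  have hmemle : ∀ l ∈ s2, ∀ q ∈ Finset.univ.filter (fun q : Fin M × Fin L => l ≤ q.2),
      L₀ ≤ q.2.val := by
    intro l hl q hq
    rw [hs2, Finset.mem_filter] at hl
    rw [Finset.mem_filter] at hq
    exact le_trans hl.2 (Fin.le_def.mp hq.2)
  have hTb0 : ∀ l ∈ s2, tailNormP M L β l = 0 := by
    intro l hl
    unfold tailNormP
    rw [Finset.sum_eq_zero, Real.sqrt_zero]
    intro q hq
    rw [hsupp q (hmemle l hl q hq)]; ring
  have hTh : ∀ l ∈ s2, tailNormP M L βhat l = tailNormP M L v l := by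
    intro l hl
    unfold tailNormP
    congr 1
    refine Finset.sum_congr rfl fun q hq => ?_
    have hb0 : β q = 0 := hsupp q (hmemle l hl q hq)
    have : v q = -βhat q := by rw [hvdef, Pi.sub_apply, hb0]; ring
    rw [this]; ring
  have hNGβ : NG M L β = ∑ l ∈ s1, c l * tailNormP M L β l := by
    have hz2 : (∑ l ∈ s2, c l * tailNormP M L β l) = 0 :=
      Finset.sum_eq_zero (fun l hl => by rw [hTb0 l hl, mul_zero])
    rw [hsplit β, hz2, add_zero]
  have hNGβhat : NG M L βhat
      = (∑ l ∈ s1, c l * tailNormP M L βhat l) + ∑ l ∈ s2, c l * tailNormP M L v l := by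
    rw [hsplit βhat]
    congr 1
    exact Finset.sum_congr rfl fun l hl => by rw [hTh l hl]
  have htri : ∀ l, tailNormP M L β l ≤ tailNormP M L βhat l + tailNormP M L v l := by
    intro l
    have hβ : β = βhat + v := by funext q; simp [hvdef]
    calc tailNormP M L β l = tailNormP M L (βhat + v) l := by rw [← hβ]
    _ ≤ _ := tailNormP_triangle M L βhat v l
  have htrisum : (∑ l ∈ s1, c l * tailNormP M L β l)
      ≤ (∑ l ∈ s1, c l * tailNormP M L βhat l) + ∑ l ∈ s1, c l * tailNormP M L v l := by
    rw [← Finset.sum_add_distrib]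
    refine Finset.sum_le_sum fun l _ => ?_
    have := mul_le_mul_of_nonneg_left (htri l) (hc0 l)
    linarith [this]
  have hvsplit := hsplit v
  rw [hNGβ, hNGβhat, hvsplit] at hmain
  have hgoal : (∑ l ∈ s2, c l * tailNormP M L v l)
      ≤ 3 * ∑ l ∈ s1, c l * tailNormP M L v l := by linarith
  exact hgoal
end

section
/- Let β, β̂ ∈ ℝ^p, let S = supp(β), let λ > 0, and define S_λ = {j : |β̂_j| > λ}. Write v = β̂ − β and suppose Σ_{j ∉ S} |v_j| ≤ 3·Σ_{j ∈ S} |v_j|. If |S| ≤ L₀, then |S_λ \ S| ≤ (3 sqrt(L₀)/λ)·‖v‖₂. -/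
/-- False-discovery bound: under the cone condition, the number of indices outside the
support of `β` where `|β̂_j| > λ` is at most `(3√L₀/λ)·‖β̂ − β‖₂`. -/
theorem false_discovery_bound {p : ℕ} (L₀ : ℕ) (β βhat : Fin p → ℝ)
    (lam : ℝ) (hlam : 0 < lam)
    (hcone : ∑ j ∈ Finset.univ.filter (fun j : Fin p => β j = 0), |βhat j - β j| ≤
      3 * ∑ j ∈ Finset.univ.filter (fun j : Fin p => β j ≠ 0), |βhat j - β j|)
    (hS : (Finset.univ.filter (fun j : Fin p => β j ≠ 0)).card ≤ L₀) :
    ((Finset.univ.filter (fun j : Fin p => lam < |βhat j|) \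
        Finset.univ.filter (fun j : Fin p => β j ≠ 0)).card : ℝ)
      ≤ (3 * Real.sqrt L₀ / lam) * Real.sqrt (∑ j, (βhat j - β j) ^ 2) := by
  set v : Fin p → ℝ := fun j => βhat j - β j with hv
  set S := Finset.univ.filter (fun j : Fin p => β j ≠ 0)
  set T := Finset.univ.filter (fun j : Fin p => lam < |βhat j|) \ S with hT
  rw [div_mul_eq_mul_div, le_div_iff₀ hlam, mul_comm _ lam]
  -- lam * card T ≤ ∑_{j∈T} |v j|
  have h1 : lam * (T.card : ℝ) ≤ ∑ j ∈ T, |v j| := by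
    rw [mul_comm]
    calc (T.card : ℝ) * lam = ∑ _j ∈ T, lam := by rw [Finset.sum_const, nsmul_eq_mul]
    _ ≤ ∑ j ∈ T, |v j| := by
        apply Finset.sum_le_sum
        intro j hj
        simp only [hT, S, Finset.mem_sdiff, Finset.mem_filter, Finset.mem_univ, true_and,
          not_not] at hj
        have : v j = βhat j := by simp [hv, hj.2]
        rw [this]
        exact le_of_lt hj.1
  have h2 : ∑ j ∈ T, |v j| ≤ ∑ j ∈ Finset.univ.filter (fun j : Fin p => β j = 0), |v j| := by
    apply Finset.sum_le_sum_of_subset_of_nonneg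
    · intro j hj
      simp only [hT, S, Finset.mem_sdiff, Finset.mem_filter, Finset.mem_univ, true_and,
        not_not] at hj
      simp [hj.2]
    · intros; positivity
  have h3 : ∑ j ∈ S, |v j| ≤ Real.sqrt L₀ * Real.sqrt (∑ j, v j ^ 2) := by
    have hcs : (∑ j ∈ S, |v j|) ^ 2 ≤ (S.card : ℝ) * ∑ j ∈ S, |v j| ^ 2 := by
      exact_mod_cast sq_sum_le_card_mul_sum_sq (s := S) (f := fun j => |v j|)
    have hle : (S.card : ℝ) * ∑ j ∈ S, |v j| ^ 2 ≤ (L₀ : ℝ) * ∑ j, v j ^ 2 := by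
      apply mul_le_mul (by exact_mod_cast hS)
      · simp only [sq_abs]
        exact Finset.sum_le_sum_of_subset_of_nonneg (Finset.subset_univ S)
          (by intros; positivity)
      · positivity
      · positivity
    have : ∑ j ∈ S, |v j| ≤ Real.sqrt ((L₀ : ℝ) * ∑ j, v j ^ 2) := by
      rw [← Real.sqrt_sq (by positivity : (0:ℝ) ≤ ∑ j ∈ S, |v j|)]
      exact Real.sqrt_le_sqrt (hcs.trans hle)
    rwa [Real.sqrt_mul (by positivity)] at this
  calc lam * (T.card : ℝ) ≤ ∑ j ∈ T, |v j| := h1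
    _ ≤ 3 * ∑ j ∈ S, |v j| := h2.trans hcone
    _ ≤ 3 * (Real.sqrt L₀ * Real.sqrt (∑ j, v j ^ 2)) := by linarith
    _ = 3 * Real.sqrt L₀ * Real.sqrt (∑ j, v j ^ 2) := by ring
end
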